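/- Let A be a finite generating set of the discrete Heisenberg group H. Then there are constants C, D, E ∈ ℝ with D > 0 such that the following holds. Let n ∈ ℤ, let a₁a₂⋯a_m be a word of minimal length in the letters of A ∪ A⁻¹ representing z^n, let f : ℝ² → ℝ be a linear functional of norm 1, and let P_n = {e, a₁, a₁a₂, …, a₁a₂⋯a_m} ⊂ H be the set of elements represented by the prefixes of this word. Then the diameter of the set f(φ(P_n)) ⊂ ℝ is at most C√|n| and at least D√|n| − E. -/

import Mathlib

/-- The discrete Heisenberg group `H = ⟨x,y | [x,[x,y]], [y,[x,y]]⟩`, realized as triples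
`⟨a, b, c⟩` of integers (the unitriangular 3×3 integer matrix with superdiagonal `a, b` and
corner `c`), so that `x = ⟨1,0,0⟩`, `y = ⟨0,1,0⟩` and `x^i * y^j * z^k = ⟨i, j, i*j + k⟩`. -/
@[ext] structure Heis where
  a : ℤ
  b : ℤ
  c : ℤ

namespace Heis

instance : Mul Heis := ⟨fun g h => ⟨g.a + h.a, g.b + h.b, g.c + h.c + g.a * h.b⟩⟩
instance : One Heis := ⟨⟨0, 0, 0⟩⟩
instance : Inv Heis := ⟨fun g => ⟨-g.a, -g.b, g.a * g.b - g.c⟩⟩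

@[simp] lemma mul_a (g h : Heis) : (g * h).a = g.a + h.a := rfl
@[simp] lemma mul_b (g h : Heis) : (g * h).b = g.b + h.b := rfl
@[simp] lemma mul_c (g h : Heis) : (g * h).c = g.c + h.c + g.a * h.b := rfl
@[simp] lemma one_a : (1 : Heis).a = 0 := rfl
@[simp] lemma one_b : (1 : Heis).b = 0 := rfl
@[simp] lemma one_c : (1 : Heis).c = 0 := rfl
@[simp] lemma inv_a (g : Heis) : g⁻¹.a = -g.a := rfl
@[simp] lemma inv_b (g : Heis) : g⁻¹.b = -g.b := rfl
@[simp] lemma inv_c (g : Heis) : g⁻¹.c = g.a * g.b - g.c := rfl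

instance : Group Heis where
  mul_assoc g h k := by ext <;> simp <;> ring
  one_mul g := by ext <;> simp
  mul_one g := by ext <;> simp
  inv_mul_cancel g := by ext <;> simp

/-- The standard generator `x` of the Heisenberg group. -/
def x : Heis := ⟨1, 0, 0⟩
/-- The standard generator `y` of the Heisenberg group. -/
def y : Heis := ⟨0, 1, 0⟩
/-- The central element `z = [x,y] = x⁻¹y⁻¹xy`, generating the center; every element of
`Heis` is uniquely of the form `x^i * y^j * z^k`. -/
def z : Heis := ⟨0, 0, 1⟩

/-- The abelianization map `φ : Heis → Heis_ab ≅ ℤ²`, sending `x^i y^j z^k` to `(i,j)`. -/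
def φ (g : Heis) : ℤ × ℤ := (g.a, g.b)

/-- The exponent of `z` in the normal form of `g`:  the unique `k` with
`g = x^i * y^j * z^k` (where `(i,j) = φ g`). -/
def zexp (g : Heis) : ℤ := g.c - g.a * g.b

end Heis

/-- `A` is a generating set of the group `G`. -/
def IsGenSet {G : Type*} [Group G] (A : Finset G) : Prop :=
  Subgroup.closure (A : Set G) = ⊤

/-- A word in the letters of `A ∪ A⁻¹`. -/
def IsWordOn {G : Type*} [Group G] (A : Finset G) (w : List G) : Prop :=
  ∀ a ∈ w, a ∈ A ∨ a⁻¹ ∈ A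

/-- The word length `|g|_A` of `g` with respect to the finite generating set `A`:
the length of a shortest word in the letters of `A` and their inverses representing `g`. -/
noncomputable def wlen {G : Type*} [Group G] (A : Finset G) (g : G) : ℕ :=
  sInf {n | ∃ w : List G, IsWordOn A w ∧ w.length = n ∧ w.prod = g}

/-- The standard embedding of `ℤ² ≅ Heis_ab` into the Euclidean plane. -/
noncomputable def toE2 (v : ℤ × ℤ) : EuclideanSpace ℝ (Fin 2) :=
  (WithLp.equiv 2 (Fin 2 → ℝ)).symm ![(v.1 : ℝ), (v.2 : ℝ)]

section WLen
variable {G : Type*} [Group G] {A : Finset G}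

lemma isWordOn_append {w₁ w₂ : List G} (h₁ : IsWordOn A w₁) (h₂ : IsWordOn A w₂) :
    IsWordOn A (w₁ ++ w₂) := by
  intro a ha
  rcases List.mem_append.1 ha with h | h
  · exact h₁ a h
  · exact h₂ a h

lemma isWordOn_invword {w : List G} (h : IsWordOn A w) :
    IsWordOn A (w.map Inv.inv).reverse := by
  intro a ha
  rw [List.mem_reverse, List.mem_map] at ha
  obtain ⟨b, hb, rfl⟩ := ha
  rcases h b hb with hb' | hb'
  · right; simpa using hb'
  · left; exact hb'

lemma prod_invword (w : List G) : ((w.map Inv.inv).reverse).prod = w.prod⁻¹ := by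
  rw [List.prod_inv_reverse]

lemma exists_word (hA : IsGenSet A) (g : G) : ∃ w : List G, IsWordOn A w ∧ w.prod = g := by
  have hg : g ∈ Subgroup.closure (A : Set G) := hA ▸ Subgroup.mem_top g
  induction hg using Subgroup.closure_induction with
  | mem a ha => exact ⟨[a], by intro b hb; simp at hb; subst hb; exact Or.inl ha, by simp⟩
  | one => exact ⟨[], by intro b hb; simp at hb, by simp⟩
  | mul a b _ _ iha ihb =>
      obtain ⟨w₁, h₁, hp₁⟩ := iha
      obtain ⟨w₂, h₂, hp₂⟩ := ihb
      exact ⟨w₁ ++ w₂, isWordOn_append h₁ h₂, by simp [hp₁, hp₂]⟩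
  | inv a _ iha =>
      obtain ⟨w₁, h₁, hp₁⟩ := iha
      exact ⟨(w₁.map Inv.inv).reverse, isWordOn_invword h₁, by rw [prod_invword, hp₁]⟩

lemma wlen_le {w : List G} {g : G} (hw : IsWordOn A w) (hp : w.prod = g) :
    wlen A g ≤ w.length :=
  Nat.sInf_le ⟨w, hw, rfl, hp⟩

lemma exists_min_word (hA : IsGenSet A) (g : G) :
    ∃ w : List G, IsWordOn A w ∧ w.length = wlen A g ∧ w.prod = g := by
  have hne : {n | ∃ w : List G, IsWordOn A w ∧ w.length = n ∧ w.prod = g}.Nonempty := by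
    obtain ⟨w, hw, hp⟩ := exists_word hA g
    exact ⟨w.length, w, hw, rfl, hp⟩
  exact Nat.sInf_mem hne

lemma wlen_mul_le (hA : IsGenSet A) (g h : G) :
    wlen A (g * h) ≤ wlen A g + wlen A h := by
  obtain ⟨w₁, h₁, hl₁, hp₁⟩ := exists_min_word hA g
  obtain ⟨w₂, h₂, hl₂, hp₂⟩ := exists_min_word hA h
  calc wlen A (g * h) ≤ (w₁ ++ w₂).length :=
        wlen_le (isWordOn_append h₁ h₂) (by simp [hp₁, hp₂])
    _ = wlen A g + wlen A h := by simp [hl₁, hl₂]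

lemma wlen_inv_le (hA : IsGenSet A) (g : G) : wlen A g⁻¹ ≤ wlen A g := by
  obtain ⟨w, hw, hl, hp⟩ := exists_min_word hA g
  calc wlen A g⁻¹ ≤ ((w.map Inv.inv).reverse).length :=
        wlen_le (isWordOn_invword hw) (by rw [prod_invword, hp])
    _ = wlen A g := by simpa using hl

lemma wlen_pow_le (hA : IsGenSet A) (g : G) (k : ℕ) :
    wlen A (g ^ k) ≤ k * wlen A g := by
  induction k with
  | zero =>
      simpa using wlen_le (A := A) (w := ([] : List G))
        (fun b hb => by simp at hb) (by simp)
  | succ k ih =>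
      calc wlen A (g ^ (k+1)) = wlen A (g ^ k * g) := by rw [pow_succ]
        _ ≤ wlen A (g ^ k) + wlen A g := wlen_mul_le hA _ _
        _ ≤ k * wlen A g + wlen A g := by omega
        _ = (k+1) * wlen A g := by ring

end WLen

namespace Heis

-- new material
lemma x_pow (k : ℕ) : x ^ k = ⟨k, 0, 0⟩ := by
  induction k with
  | zero => rfl
  | succ k ih => rw [pow_succ, ih]; ext <;> simp [x]

lemma y_pow (k : ℕ) : y ^ k = ⟨0, k, 0⟩ := by
  induction k with
  | zero => rfl
  | succ k ih => rw [pow_succ, ih]; ext <;> simp [y]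

lemma z_pow (k : ℕ) : z ^ k = ⟨0, 0, k⟩ := by
  induction k with
  | zero => rfl
  | succ k ih => rw [pow_succ, ih]; ext <;> simp [z]

lemma z_zpow (n : ℤ) : z ^ n = ⟨0, 0, n⟩ := by
  cases n with
  | ofNat k => rw [Int.ofNat_eq_natCast, zpow_natCast, z_pow]
  | negSucc k =>
      rw [zpow_negSucc, z_pow]
      ext <;> simp [Int.negSucc_eq] <;> ring

lemma comm_pow (s : ℕ) : x ^ s * y ^ s * (x ^ s)⁻¹ * (y ^ s)⁻¹ = z ^ (s * s) := by
  rw [x_pow, y_pow, z_pow]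
  ext <;> simp


end Heis

section ZBound
variable {A : Finset Heis}
open Heis

noncomputable def Lc (A : Finset Heis) : ℕ := 1 + wlen A x + wlen A y + wlen A z

lemma one_le_Lc : 1 ≤ Lc A := by unfold Lc; omega

lemma wlen_z_pow_nat (hA : IsGenSet A) (N : ℕ) :
    wlen A (z ^ N) ≤ 6 * N.sqrt * Lc A := by
  set s := N.sqrt with hs
  set r := N - s * s with hrdef
  have hs2 : s * s ≤ N := by have := Nat.sqrt_le' N; rwa [pow_two] at this
  have hN : N = s * s + r := by omega
  have hr : r ≤ 2 * s := by
    have h2 := Nat.lt_succ_sqrt' N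
    rw [Nat.succ_eq_add_one, pow_two] at h2
    rw [← hs] at h2
    have h3 : (s + 1) * (s + 1) = s * s + 2 * s + 1 := by ring
    omega
  have hsplit : z ^ N = x ^ s * y ^ s * (x ^ s)⁻¹ * (y ^ s)⁻¹ * z ^ r := by
    rw [comm_pow, ← pow_add, hN]
  rw [hsplit]
  have h1 : wlen A (x ^ s) ≤ s * wlen A x := wlen_pow_le hA x s
  have h2 : wlen A (y ^ s) ≤ s * wlen A y := wlen_pow_le hA y s
  have h3 : wlen A ((x ^ s)⁻¹) ≤ s * wlen A x := (wlen_inv_le hA _).trans h1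
  have h4 : wlen A ((y ^ s)⁻¹) ≤ s * wlen A y := (wlen_inv_le hA _).trans h2
  have h5 : wlen A (z ^ r) ≤ r * wlen A z := wlen_pow_le hA z r
  have hx : wlen A x ≤ Lc A := by unfold Lc; omega
  have hy : wlen A y ≤ Lc A := by unfold Lc; omega
  have hz : wlen A z ≤ Lc A := by unfold Lc; omega
  calc wlen A (x ^ s * y ^ s * (x ^ s)⁻¹ * (y ^ s)⁻¹ * z ^ r)
      ≤ wlen A (x ^ s * y ^ s * (x ^ s)⁻¹ * (y ^ s)⁻¹) + wlen A (z ^ r) := wlen_mul_le hA _ _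
    _ ≤ (wlen A (x ^ s * y ^ s * (x ^ s)⁻¹) + wlen A ((y ^ s)⁻¹)) + wlen A (z ^ r) := by
        have := wlen_mul_le hA (x ^ s * y ^ s * (x ^ s)⁻¹) ((y ^ s)⁻¹); omega
    _ ≤ ((wlen A (x ^ s * y ^ s) + wlen A ((x ^ s)⁻¹)) + wlen A ((y ^ s)⁻¹)) + wlen A (z ^ r) := by
        have := wlen_mul_le hA (x ^ s * y ^ s) ((x ^ s)⁻¹); omega
    _ ≤ (((wlen A (x ^ s) + wlen A (y ^ s)) + wlen A ((x ^ s)⁻¹)) + wlen A ((y ^ s)⁻¹))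
          + wlen A (z ^ r) := by
        have := wlen_mul_le hA (x ^ s) (y ^ s); omega
    _ ≤ 6 * s * Lc A := by
        have b1 : s * wlen A x ≤ s * Lc A := Nat.mul_le_mul_left s hx
        have b2 : s * wlen A y ≤ s * Lc A := Nat.mul_le_mul_left s hy
        have b5 : r * wlen A z ≤ (2 * s) * Lc A :=
          Nat.mul_le_mul hr hz
        have e1 : (2 * s) * Lc A = 2 * (s * Lc A) := by ring
        have e2 : 6 * s * Lc A = 6 * (s * Lc A) := by ring
        omega

lemma wlen_z_zpow_real (hA : IsGenSet A) (n : ℤ) :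
    (wlen A (z ^ n) : ℝ) ≤ 6 * Lc A * Real.sqrt |(n : ℝ)| := by
  set N := n.natAbs with hNdef
  have hnat : wlen A (z ^ n) ≤ 6 * N.sqrt * Lc A := by
    rcases Int.natAbs_eq n with h | h
    · rw [h, zpow_natCast]; exact wlen_z_pow_nat hA N
    · rw [h, zpow_neg, zpow_natCast]
      exact (wlen_inv_le hA _).trans (wlen_z_pow_nat hA N)
  have habs : |(n : ℝ)| = (N : ℝ) := by
    rw [hNdef]; push_cast [Nat.cast_natAbs]; ring
  have hsq : (N.sqrt : ℝ) ≤ Real.sqrt N := by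
    exact Real.le_sqrt_of_sq_le (by exact_mod_cast Nat.sqrt_le' N)
  calc (wlen A (z ^ n) : ℝ) ≤ ((6 * N.sqrt * Lc A : ℕ) : ℝ) := by exact_mod_cast hnat
    _ = 6 * (N.sqrt : ℝ) * (Lc A : ℝ) := by push_cast; ring
    _ ≤ 6 * Real.sqrt N * Lc A := by
        have : (0:ℝ) ≤ Lc A := by positivity
        nlinarith [hsq]
    _ = 6 * Lc A * Real.sqrt |(n : ℝ)| := by rw [habs]; ring

end ZBound

section Core
open Heis

/-- bound on letters -/
noncomputable def Kc (A : Finset Heis) : ℤ :=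
  1 + ∑ a ∈ A, (|a.a| + |a.b| + |zexp a| + |zexp a⁻¹|)

lemma one_le_Kc (A : Finset Heis) : 1 ≤ Kc A := by
  unfold Kc
  have : 0 ≤ ∑ a ∈ A, (|a.a| + |a.b| + |zexp a| + |zexp a⁻¹|) :=
    Finset.sum_nonneg fun a _ => by positivity
  omega

lemma letter_bound {A : Finset Heis} {g : Heis} (hg : g ∈ A ∨ g⁻¹ ∈ A) :
    |g.a| ≤ Kc A ∧ |g.b| ≤ Kc A ∧ |zexp g| ≤ Kc A := by
  have key : ∀ h ∈ A, |h.a| + |h.b| + |zexp h| + |zexp h⁻¹| ≤ Kc A := by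
    intro h hh
    have := Finset.single_le_sum
      (f := fun a : Heis => |a.a| + |a.b| + |zexp a| + |zexp a⁻¹|)
      (fun a _ => by positivity) hh
    unfold Kc; omega
  have hB : |g.a| + |g.b| + |zexp g| + |zexp g⁻¹| ≤ Kc A := by
    rcases hg with h | h
    · exact key g h
    · have := key g⁻¹ h
      simp only [inv_a, inv_b, abs_neg, inv_inv] at this
      omega
  have h1 := abs_nonneg g.a
  have h2 := abs_nonneg g.b
  have h3 := abs_nonneg (zexp g)
  have h4 := abs_nonneg (zexp g⁻¹)
  omega

/-- projected coordinates -/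
def Uf (α β : ℝ) (g : Heis) : ℝ := α * g.a + β * g.b
def Vf (α β : ℝ) (g : Heis) : ℝ := -β * g.a + α * g.b

lemma psi {α β : ℝ} (hαβ : α ^ 2 + β ^ 2 = 1) (g h : Heis) :
    2 * (zexp (g⁻¹ * h) : ℝ)
      + 2 * Uf α β g * (Vf α β h - Vf α β g)
      + (Uf α β h - Uf α β g) * (Vf α β h - Vf α β g)
      + ((h.a : ℝ) - g.a) * ((h.b : ℝ) - g.b)
    = 2 * ((zexp h : ℝ) - (zexp g : ℝ))
      + (Uf α β h * Vf α β h - Uf α β g * Vf α β g)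
      + ((h.a : ℝ) * (h.b : ℝ) - (g.a : ℝ) * (g.b : ℝ)) := by
  simp only [Uf, Vf, zexp, mul_a, mul_b, mul_c, inv_a, inv_b, inv_c]
  push_cast
  linear_combination ((g.a : ℝ) * ((h.b : ℝ) - g.b) - (g.b : ℝ) * ((h.a : ℝ) - g.a)) * hαβ

lemma grand {α β : ℝ} (hαβ : α ^ 2 + β ^ 2 = 1) (q : ℕ → Heis) (m : ℕ) :
    ∑ t ∈ Finset.range m,
      (2 * (zexp ((q t)⁻¹ * q (t + 1)) : ℝ)
        + 2 * Uf α β (q t) * (Vf α β (q (t + 1)) - Vf α β (q t))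
        + (Uf α β (q (t + 1)) - Uf α β (q t)) * (Vf α β (q (t + 1)) - Vf α β (q t))
        + (((q (t + 1)).a : ℝ) - (q t).a) * (((q (t + 1)).b : ℝ) - (q t).b))
    = 2 * ((zexp (q m) : ℝ) - (zexp (q 0) : ℝ))
      + (Uf α β (q m) * Vf α β (q m) - Uf α β (q 0) * Vf α β (q 0))
      + (((q m).a : ℝ) * ((q m).b : ℝ) - ((q 0).a : ℝ) * ((q 0).b : ℝ)) := by
  have hcong :
      ∑ t ∈ Finset.range m,
        (2 * (zexp ((q t)⁻¹ * q (t + 1)) : ℝ)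
          + 2 * Uf α β (q t) * (Vf α β (q (t + 1)) - Vf α β (q t))
          + (Uf α β (q (t + 1)) - Uf α β (q t)) * (Vf α β (q (t + 1)) - Vf α β (q t))
          + (((q (t + 1)).a : ℝ) - (q t).a) * (((q (t + 1)).b : ℝ) - (q t).b))
      = ∑ t ∈ Finset.range m,
        ((2 * (zexp (q (t + 1)) : ℝ) - 2 * (zexp (q t) : ℝ))
          + ((Uf α β (q (t + 1)) * Vf α β (q (t + 1)) - Uf α β (q t) * Vf α β (q t))
          + (((q (t + 1)).a : ℝ) * ((q (t + 1)).b : ℝ) - ((q t).a : ℝ) * ((q t).b : ℝ)))) := by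
    refine Finset.sum_congr rfl fun t _ => ?_
    have := psi hαβ (q t) (q (t + 1))
    linarith
  rw [hcong, Finset.sum_add_distrib, Finset.sum_add_distrib]
  rw [Finset.sum_range_sub (fun t => 2 * (zexp (q t) : ℝ)) m,
    Finset.sum_range_sub (fun t => Uf α β (q t) * Vf α β (q t)) m,
    Finset.sum_range_sub (fun t => ((q t).a : ℝ) * ((q t).b : ℝ)) m]
  ring

end Core


set_option maxHeartbeats 2000000 in
/-- Lemma `notstraight`. For every finite generating set `A` of the
discrete Heisenberg group there are `C, D, E ∈ ℝ` with `D > 0` such that for every `n ∈ ℤ`,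
every minimal-length word `a₁⋯a_m` in the letters of `A ∪ A⁻¹` representing `z^n`, and every
linear functional `f : ℝ² → ℝ` of norm `1`, the diameter of `f(φ(P_n))`, where
`P_n = {e, a₁, a₁a₂, …, a₁⋯a_m}` is the set of prefix products, is at most `C√|n|` and at
least `D√|n| − E`. -/
theorem heisenberg_notstraight
    (A : Finset Heis) (hA : IsGenSet A) :
    ∃ C D E : ℝ, 0 < D ∧
      ∀ (n : ℤ) (w : List Heis),
        IsWordOn A w → w.prod = Heis.z ^ n → w.length = wlen A (Heis.z ^ n) →
        ∀ f : EuclideanSpace ℝ (Fin 2) →L[ℝ] ℝ, ‖f‖ = 1 →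
          Metric.diam ((fun t : ℕ => f (toE2 (Heis.φ (w.take t).prod))) ''
              {t : ℕ | t ≤ w.length}) ≤ C * Real.sqrt |(n : ℝ)| ∧
          D * Real.sqrt |(n : ℝ)| - E ≤
            Metric.diam ((fun t : ℕ => f (toE2 (Heis.φ (w.take t).prod))) ''
              {t : ℕ | t ≤ w.length}) := by
  classical
  set Kr : ℝ := (Kc A : ℝ) with hKrdef
  set Lr : ℝ := (Lc A : ℝ) with hLrdef
  have hKr1 : (1 : ℝ) ≤ Kr := by rw [hKrdef]; exact_mod_cast one_le_Kc A
  have hLr1 : (1 : ℝ) ≤ Lr := by rw [hLrdef]; exact_mod_cast one_le_Lc (A := A)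
  have hKr0 : (0 : ℝ) < Kr := by linarith
  have hLr0 : (0 : ℝ) < Lr := by linarith
  refine ⟨24 * Kr * Lr, 1 / (12 * Kr * Lr), (2 + 5 * Kr) / 4, by positivity, ?_⟩
  intro n w hw hprod hlen f hf
  set m := w.length with hm
  set p : ℕ → Heis := fun t => (w.take t).prod with hp
  -- decompose the functional
  set c := (InnerProductSpace.toDual ℝ (EuclideanSpace ℝ (Fin 2))).symm f with hcdef
  have hc : ∀ v, f v = (inner ℝ c v : ℝ) := by
    intro v
    conv_lhs => rw [← (InnerProductSpace.toDual ℝ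
      (EuclideanSpace ℝ (Fin 2))).apply_symm_apply f]
    rw [InnerProductSpace.toDual_apply_apply]
  set α : ℝ := c 0 with hα
  set β : ℝ := c 1 with hβ
  have hcnorm : ‖c‖ = 1 := by
    rw [hcdef, LinearIsometryEquiv.norm_map]; exact hf
  have hαβ : α ^ 2 + β ^ 2 = 1 := by
    have h1 : (inner ℝ c c : ℝ) = ‖c‖ ^ 2 := real_inner_self_eq_norm_sq c
    rw [hcnorm] at h1
    rw [PiLp.inner_apply] at h1
    simp only [RCLike.inner_apply, starRingEnd_apply, star_trivial,
      Fin.sum_univ_two] at h1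
    rw [hα, hβ]; nlinarith [h1]
  have hfU : ∀ g : Heis, f (toE2 (Heis.φ g)) = Uf α β g := by
    intro g
    rw [hc, toE2, PiLp.inner_apply]
    simp only [RCLike.inner_apply, starRingEnd_apply, star_trivial, Fin.sum_univ_two,
      WithLp.equiv_symm_apply, WithLp.ofLp_toLp, Matrix.cons_val_zero, Matrix.cons_val_one,
      Matrix.head_cons]
    rw [Uf, hα, hβ, Heis.φ]; ring
  have hαle : |α| ≤ 1 := by nlinarith [sq_abs α, abs_nonneg α, sq_nonneg β]
  have hβle : |β| ≤ 1 := by nlinarith [sq_abs β, abs_nonneg β, sq_nonneg α]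
  -- the set and its diameter
  set S := (fun t : ℕ => f (toE2 (Heis.φ (w.take t).prod))) '' {t : ℕ | t ≤ m} with hS
  set Dm := Metric.diam S with hDm
  have hDm0 : 0 ≤ Dm := Metric.diam_nonneg
  have hmemS : ∀ t, t ≤ m → Uf α β (p t) ∈ S := by
    intro t ht
    exact ⟨t, ht, hfU (p t)⟩
  have hSbdd : Bornology.IsBounded S := by
    have : {t : ℕ | t ≤ m} = Set.Iic m := rfl
    rw [hS, this]
    exact ((Set.finite_Iic m).image _).isBounded
  -- endpoints
  have hp0 : p 0 = 1 := by simp [hp]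
  have hpm : p m = ⟨0, 0, n⟩ := by
    rw [hp]
    simp only [hm, List.take_length]
    rw [hprod, Heis.z_zpow]
  -- steps
  have hstep : ∀ t, t < m → ∃ g : Heis, (g ∈ A ∨ g⁻¹ ∈ A) ∧ p (t + 1) = p t * g := by
    intro t ht
    refine ⟨w.get ⟨t, ht⟩, hw _ (List.get_mem w ⟨t, ht⟩), ?_⟩
    rw [hp]
    exact List.prod_take_succ w t ht
  -- uniform bound on the grand sum terms
  have hU0 : Uf α β (p 0) = 0 := by rw [hp0]; simp [Uf]
  have hUD : ∀ t, t ≤ m → |Uf α β (p t)| ≤ Dm := by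
    intro t ht
    have := Metric.dist_le_diam_of_mem hSbdd (hmemS t ht) (hmemS 0 (Nat.zero_le m))
    rwa [Real.dist_eq, hU0, sub_zero] at this
  have hGbound : ∀ t, t < m →
      |2 * (Heis.zexp ((p t)⁻¹ * p (t + 1)) : ℝ)
        + 2 * Uf α β (p t) * (Vf α β (p (t + 1)) - Vf α β (p t))
        + (Uf α β (p (t + 1)) - Uf α β (p t)) * (Vf α β (p (t + 1)) - Vf α β (p t))
        + (((p (t + 1)).a : ℝ) - (p t).a) * (((p (t + 1)).b : ℝ) - (p t).b)|
      ≤ 2 * Kr + 4 * Kr * Dm + 5 * Kr ^ 2 := by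
    intro t ht
    obtain ⟨g, hgA, hgstep⟩ := hstep t ht
    obtain ⟨hga, hgb, hgz⟩ := letter_bound hgA
    have hgaR : |(g.a : ℝ)| ≤ Kr := by rw [hKrdef, ← Int.cast_abs]; exact_mod_cast hga
    have hgbR : |(g.b : ℝ)| ≤ Kr := by rw [hKrdef, ← Int.cast_abs]; exact_mod_cast hgb
    have hgzR : |(Heis.zexp g : ℝ)| ≤ Kr := by
      rw [hKrdef, ← Int.cast_abs]; exact_mod_cast hgz
    have hζ : (p t)⁻¹ * p (t + 1) = g := by rw [hgstep]; group
    have hdX : ((p (t + 1)).a : ℝ) - (p t).a = (g.a : ℝ) := by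
      rw [hgstep]; push_cast [Heis.mul_a]; ring
    have hdY : ((p (t + 1)).b : ℝ) - (p t).b = (g.b : ℝ) := by
      rw [hgstep]; push_cast [Heis.mul_b]; ring
    have hdU : Uf α β (p (t + 1)) - Uf α β (p t) = α * g.a + β * g.b := by
      simp only [Uf]; rw [hgstep]; push_cast [Heis.mul_a, Heis.mul_b]; ring
    have hdV : Vf α β (p (t + 1)) - Vf α β (p t) = -β * g.a + α * g.b := by
      simp only [Vf]; rw [hgstep]; push_cast [Heis.mul_a, Heis.mul_b]; ring
    have hdUb : |Uf α β (p (t + 1)) - Uf α β (p t)| ≤ 2 * Kr := by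
      rw [hdU]
      calc |α * g.a + β * g.b| ≤ |α * g.a| + |β * g.b| := abs_add_le _ _
        _ = |α| * |(g.a : ℝ)| + |β| * |(g.b : ℝ)| := by rw [abs_mul, abs_mul]
        _ ≤ 1 * Kr + 1 * Kr :=
            add_le_add (mul_le_mul hαle hgaR (abs_nonneg _) zero_le_one)
              (mul_le_mul hβle hgbR (abs_nonneg _) zero_le_one)
        _ = 2 * Kr := by ring
    have hdVb : |Vf α β (p (t + 1)) - Vf α β (p t)| ≤ 2 * Kr := by
      rw [hdV]
      calc |-β * g.a + α * g.b| ≤ |(-β) * g.a| + |α * g.b| := abs_add_le _ _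
        _ = |β| * |(g.a : ℝ)| + |α| * |(g.b : ℝ)| := by
            rw [abs_mul, abs_mul, abs_neg]
        _ ≤ 1 * Kr + 1 * Kr :=
            add_le_add (mul_le_mul hβle hgaR (abs_nonneg _) zero_le_one)
              (mul_le_mul hαle hgbR (abs_nonneg _) zero_le_one)
        _ = 2 * Kr := by ring
    have hUb : |Uf α β (p t)| ≤ Dm := hUD t (le_of_lt ht)
    have b1 : |2 * (Heis.zexp ((p t)⁻¹ * p (t + 1)) : ℝ)| ≤ 2 * Kr := by
      rw [hζ, abs_mul, abs_two]; linarith [hgzR]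
    have b2 : |2 * Uf α β (p t) * (Vf α β (p (t + 1)) - Vf α β (p t))| ≤ 2 * Dm * (2 * Kr) := by
      rw [mul_assoc, abs_mul, abs_mul, abs_two]
      have := mul_le_mul hUb hdVb (abs_nonneg _) hDm0
      linarith
    have b3 : |(Uf α β (p (t + 1)) - Uf α β (p t)) * (Vf α β (p (t + 1)) - Vf α β (p t))|
        ≤ (2 * Kr) * (2 * Kr) := by
      rw [abs_mul]
      exact mul_le_mul hdUb hdVb (abs_nonneg _) (by linarith)
    have b4 : |(((p (t + 1)).a : ℝ) - (p t).a) * (((p (t + 1)).b : ℝ) - (p t).b)|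
        ≤ Kr * Kr := by
      rw [abs_mul, hdX, hdY]
      exact mul_le_mul hgaR hgbR (abs_nonneg _) (by linarith)
    calc |2 * (Heis.zexp ((p t)⁻¹ * p (t + 1)) : ℝ)
        + 2 * Uf α β (p t) * (Vf α β (p (t + 1)) - Vf α β (p t))
        + (Uf α β (p (t + 1)) - Uf α β (p t)) * (Vf α β (p (t + 1)) - Vf α β (p t))
        + (((p (t + 1)).a : ℝ) - (p t).a) * (((p (t + 1)).b : ℝ) - (p t).b)|
        ≤ |2 * (Heis.zexp ((p t)⁻¹ * p (t + 1)) : ℝ)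
          + 2 * Uf α β (p t) * (Vf α β (p (t + 1)) - Vf α β (p t))
          + (Uf α β (p (t + 1)) - Uf α β (p t)) * (Vf α β (p (t + 1)) - Vf α β (p t))|
          + |(((p (t + 1)).a : ℝ) - (p t).a) * (((p (t + 1)).b : ℝ) - (p t).b)| := abs_add_le _ _
      _ ≤ (|2 * (Heis.zexp ((p t)⁻¹ * p (t + 1)) : ℝ)
          + 2 * Uf α β (p t) * (Vf α β (p (t + 1)) - Vf α β (p t))|
          + |(Uf α β (p (t + 1)) - Uf α β (p t)) * (Vf α β (p (t + 1)) - Vf α β (p t))|)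
          + |(((p (t + 1)).a : ℝ) - (p t).a) * (((p (t + 1)).b : ℝ) - (p t).b)| := by
            gcongr; exact abs_add_le _ _
      _ ≤ ((|2 * (Heis.zexp ((p t)⁻¹ * p (t + 1)) : ℝ)|
          + |2 * Uf α β (p t) * (Vf α β (p (t + 1)) - Vf α β (p t))|)
          + |(Uf α β (p (t + 1)) - Uf α β (p t)) * (Vf α β (p (t + 1)) - Vf α β (p t))|)
          + |(((p (t + 1)).a : ℝ) - (p t).a) * (((p (t + 1)).b : ℝ) - (p t).b)| := by
            gcongr; exact abs_add_le _ _
      _ ≤ 2 * Kr + 4 * Kr * Dm + 5 * Kr ^ 2 := by linarith [b1, b2, b3, b4]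
  -- the grand identity
  have hsum : ∑ t ∈ Finset.range m,
      (2 * (Heis.zexp ((p t)⁻¹ * p (t + 1)) : ℝ)
        + 2 * Uf α β (p t) * (Vf α β (p (t + 1)) - Vf α β (p t))
        + (Uf α β (p (t + 1)) - Uf α β (p t)) * (Vf α β (p (t + 1)) - Vf α β (p t))
        + (((p (t + 1)).a : ℝ) - (p t).a) * (((p (t + 1)).b : ℝ) - (p t).b))
      = 2 * (n : ℝ) := by
    rw [grand hαβ p m]
    rw [hp0, hpm]
    simp [Uf, Vf, Heis.zexp]
  -- main inequality
  have hmain : 2 * |(n : ℝ)| ≤ (m : ℝ) * (2 * Kr + 4 * Kr * Dm + 5 * Kr ^ 2) := by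
    have h1 : |(2 : ℝ) * (n : ℝ)| = 2 * |(n : ℝ)| := by rw [abs_mul, abs_two]
    rw [← h1, ← hsum]
    have habs := Finset.abs_sum_le_sum_abs
      (fun t => 2 * (Heis.zexp ((p t)⁻¹ * p (t + 1)) : ℝ)
        + 2 * Uf α β (p t) * (Vf α β (p (t + 1)) - Vf α β (p t))
        + (Uf α β (p (t + 1)) - Uf α β (p t)) * (Vf α β (p (t + 1)) - Vf α β (p t))
        + (((p (t + 1)).a : ℝ) - (p t).a) * (((p (t + 1)).b : ℝ) - (p t).b))
      (Finset.range m)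
    have hle : ∑ t ∈ Finset.range m,
        |2 * (Heis.zexp ((p t)⁻¹ * p (t + 1)) : ℝ)
          + 2 * Uf α β (p t) * (Vf α β (p (t + 1)) - Vf α β (p t))
          + (Uf α β (p (t + 1)) - Uf α β (p t)) * (Vf α β (p (t + 1)) - Vf α β (p t))
          + (((p (t + 1)).a : ℝ) - (p t).a) * (((p (t + 1)).b : ℝ) - (p t).b)|
        ≤ ∑ _t ∈ Finset.range m, (2 * Kr + 4 * Kr * Dm + 5 * Kr ^ 2) :=
      Finset.sum_le_sum fun t ht => hGbound t (Finset.mem_range.1 ht)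
    rw [Finset.sum_const, Finset.card_range, nsmul_eq_mul] at hle
    linarith [habs, hle]
  -- length bound
  have hm6 : (m : ℝ) ≤ 6 * Lr * Real.sqrt |(n : ℝ)| := by
    rw [hlen]
    exact wlen_z_zpow_real hA n
  have hsqrt0 : 0 ≤ Real.sqrt |(n : ℝ)| := Real.sqrt_nonneg _
  -- coordinate growth bound, for the upper bound on the diameter
  have hXY : ∀ t, t ≤ m → |((p t).a : ℝ)| ≤ Kr * t ∧ |((p t).b : ℝ)| ≤ Kr * t := by
    intro t
    induction t with
    | zero => intro _; rw [hp0]; simp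
    | succ t ih =>
        intro h
        have ht : t < m := by omega
        obtain ⟨hXa, hYa⟩ := ih (by omega)
        obtain ⟨g, hgA, hgstep⟩ := hstep t ht
        obtain ⟨hga, hgb, _⟩ := letter_bound hgA
        have hgaR : |(g.a : ℝ)| ≤ Kr := by rw [hKrdef, ← Int.cast_abs]; exact_mod_cast hga
        have hgbR : |(g.b : ℝ)| ≤ Kr := by rw [hKrdef, ← Int.cast_abs]; exact_mod_cast hgb
        rw [hgstep]
        constructor
        · push_cast [Heis.mul_a]
          nlinarith [abs_add_le (((p t).a : ℤ) : ℝ) ((g.a : ℝ)), hXa, hgaR]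
        · push_cast [Heis.mul_b]
          nlinarith [abs_add_le (((p t).b : ℤ) : ℝ) ((g.b : ℝ)), hYa, hgbR]
  have hUball : ∀ t, t ≤ m → |Uf α β (p t)| ≤ 2 * Kr * m := by
    intro t ht
    obtain ⟨hXa, hYa⟩ := hXY t ht
    have htm : (t : ℝ) ≤ (m : ℝ) := by exact_mod_cast ht
    calc |Uf α β (p t)| = |α * ((p t).a : ℝ) + β * ((p t).b : ℝ)| := rfl
      _ ≤ |α * ((p t).a : ℝ)| + |β * ((p t).b : ℝ)| := abs_add_le _ _
      _ = |α| * |((p t).a : ℝ)| + |β| * |((p t).b : ℝ)| := by rw [abs_mul, abs_mul]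
      _ ≤ 1 * (Kr * t) + 1 * (Kr * t) := by
          have h1 : (0:ℝ) ≤ Kr * t := by positivity
          exact add_le_add (mul_le_mul hαle hXa (abs_nonneg _) zero_le_one)
            (mul_le_mul hβle hYa (abs_nonneg _) zero_le_one)
      _ ≤ 2 * Kr * m := by
          have hK : Kr * (t : ℝ) ≤ Kr * (m : ℝ) :=
            mul_le_mul_of_nonneg_left htm (le_of_lt hKr0)
          linarith
  have hdiam_le : Dm ≤ 4 * Kr * m := by
    rw [hDm]
    apply Metric.diam_le_of_forall_dist_le (by positivity)
    rintro u ⟨s, hs, rfl⟩ v ⟨t, ht, rfl⟩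
    beta_reduce
    rw [hfU, hfU, Real.dist_eq]
    calc |Uf α β (p s) - Uf α β (p t)| ≤ |Uf α β (p s)| + |Uf α β (p t)| := abs_sub _ _
      _ ≤ 2 * Kr * m + 2 * Kr * m := by
          have := hUball s hs
          have := hUball t ht
          linarith
      _ = 4 * Kr * m := by ring
  constructor
  · -- upper bound
    calc Metric.diam ((fun t : ℕ => f (toE2 (Heis.φ (w.take t).prod))) '' {t : ℕ | t ≤ m})
        ≤ 4 * Kr * m := hdiam_le
      _ ≤ 4 * Kr * (6 * Lr * Real.sqrt |(n : ℝ)|) := by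
          have := mul_le_mul_of_nonneg_left hm6 (by positivity : (0:ℝ) ≤ 4 * Kr)
          linarith
      _ = 24 * Kr * Lr * Real.sqrt |(n : ℝ)| := by ring
  · -- lower bound
    rcases eq_or_ne n 0 with rfl | hn
    · have : Real.sqrt |((0 : ℤ) : ℝ)| = 0 := by norm_num
      rw [this]
      have : (0:ℝ) ≤ (2 + 5 * Kr) / 4 := by positivity
      linarith [hDm0]
    · -- n ≠ 0, so m ≥ 1
      have hm1 : 1 ≤ m := by
        by_contra h
        have hm0 : m = 0 := by omega
        have : w = [] := List.length_eq_zero_iff.mp hm0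
        rw [this] at hprod
        have := Heis.z_zpow n
        rw [← hprod] at this
        simp only [List.prod_nil] at this
        have : (0 : ℤ) = n := congrArg Heis.c this
        exact hn this.symm
      have hmR : (1 : ℝ) ≤ (m : ℝ) := by exact_mod_cast hm1
      have hm0R : (0 : ℝ) < (m : ℝ) := by linarith
      have hsq : Real.sqrt |(n : ℝ)| * Real.sqrt |(n : ℝ)| = |(n : ℝ)| :=
        Real.mul_self_sqrt (abs_nonneg _)
      have key : (m : ℝ) * Real.sqrt |(n : ℝ)| ≤ 6 * Lr * |(n : ℝ)| := by
        calc (m : ℝ) * Real.sqrt |(n : ℝ)|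
            ≤ (6 * Lr * Real.sqrt |(n : ℝ)|) * Real.sqrt |(n : ℝ)| :=
              mul_le_mul_of_nonneg_right hm6 hsqrt0
          _ = 6 * Lr * |(n : ℝ)| := by rw [mul_assoc, hsq]
      have e1 : (1 / (12 * Kr * Lr) * Real.sqrt |(n : ℝ)| - (2 + 5 * Kr) / 4)
            * (4 * Kr * (m : ℝ))
          = ((m : ℝ) * Real.sqrt |(n : ℝ)|) / (3 * Lr)
            - ((m : ℝ) * (2 * Kr) + (m : ℝ) * (5 * Kr ^ 2)) := by
        field_simp
        ring
      have e2 : ((m : ℝ) * Real.sqrt |(n : ℝ)|) / (3 * Lr) ≤ 2 * |(n : ℝ)| := by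
        rw [div_le_iff₀ (by positivity)]
        nlinarith [key]
      have h3 : (1 / (12 * Kr * Lr) * Real.sqrt |(n : ℝ)| - (2 + 5 * Kr) / 4)
            * (4 * Kr * (m : ℝ)) ≤ Dm * (4 * Kr * (m : ℝ)) := by
        rw [e1]
        nlinarith [hmain, e2]
      have := le_of_mul_le_mul_right h3 (by positivity : (0:ℝ) < 4 * Kr * (m : ℝ))
      exact this
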